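/- Let p > p₀(5) and κ in the admissible range as above. Define for t,r ≥ 0: I_{1,-}(t,r) = ∫_0^t ⟨s⟩^{-(p-1)} ⟨s+|t-s-r|⟩^{-p} ⟨s-|t-s-r|⟩^{-p(κ-1)} ⟨t-s-r⟩ ds. Then there is a constant C with I_{1,-}(t,r) ≤ C⟨t-r⟩^{-κ} if t ≥ 2r, and I_{1,-}(t,r) ≤ C⟨t-r⟩^{-(κ-1)} if t ≤ 2r. -/

import Mathlib

open MeasureTheory

/-- The integral `I_{1,-}` from the nonlinear estimates. -/
noncomputable def I1m (p κ t r : ℝ) : ℝ :=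
  ∫ s in (0:ℝ)..t, (1 + |s|) ^ (-(p - 1)) * (1 + |s + abs (t - s - r)|) ^ (-p)
    * (1 + |s - abs (t - s - r)|) ^ (-(p * (κ - 1))) * (1 + |t - s - r|)

open Real Set intervalIntegral


lemma cont_oam (c : ℝ) : Continuous (fun u : ℝ => (1+|u|) ^ (-c)) := by
  apply Continuous.rpow_const (continuous_const.add continuous_abs)
  intro x; left; exact (by positivity : (0:ℝ) < 1 + |x|).ne'

lemma int_oam (c α β : ℝ) : IntervalIntegrable (fun u : ℝ => (1+|u|)^(-c)) volume α β :=
  (cont_oam c).intervalIntegrable α β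

lemma L_le {c c' : ℝ} (h0 : 0 ≤ c') (hcc : c' ≤ c) (h1 : c' < 1) {M : ℝ} (hM : 0 ≤ M) :
    ∫ u in (0:ℝ)..M, (1+|u|)^(-c) ≤ (1+M)^(1-c') / (1-c') := by
  have hcont : ContinuousOn (fun u : ℝ => (1+u)^(-c')) (uIcc 0 M) := by
    apply ContinuousOn.rpow_const (by fun_prop)
    intro x hx; left
    rw [uIcc_of_le hM] at hx
    have := hx.1; positivity
  have step1 : ∫ u in (0:ℝ)..M, (1+|u|)^(-c) ≤ ∫ u in (0:ℝ)..M, (1+u)^(-c') := by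
    apply integral_mono_on hM (int_oam c 0 M) (hcont.intervalIntegrable)
    intro x hx
    rw [abs_of_nonneg hx.1]
    have : (1:ℝ) ≤ 1 + x := by linarith [hx.1]
    exact rpow_le_rpow_of_exponent_le this (by linarith)
  have step2 : ∫ u in (0:ℝ)..M, (1+u)^(-c') = ((1+M)^(1-c') - 1) / (1-c') := by
    have := intervalIntegral.integral_comp_add_left (a := (0:ℝ)) (b := M)
      (fun x : ℝ => x ^ (-c')) 1
    rw [this, add_zero, integral_rpow (Or.inl (by linarith)), Real.one_rpow]
    ring_nf
  rw [step2] at step1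
  refine step1.trans ?_
  gcongr
  · linarith

lemma L_tail {c : ℝ} (hc : 1 < c) {α β : ℝ} (h0 : 0 ≤ α) (hαβ : α ≤ β) :
    ∫ u in α..β, (1+|u|)^(-c) ≤ (1+α)^(1-c) / (c-1) := by
  have heq : ∫ u in α..β, (1+|u|)^(-c) = ∫ u in α..β, (1+u)^(-c) := by
    apply intervalIntegral.integral_congr
    intro x hx
    rw [uIcc_of_le hαβ] at hx
    dsimp only
    rw [abs_of_nonneg (h0.trans hx.1)]
  have step2 : ∫ u in α..β, (1+u)^(-c) = ((1+β)^(1-c) - (1+α)^(1-c)) / (1-c) := by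
    have := intervalIntegral.integral_comp_add_left (a := α) (b := β)
      (fun x : ℝ => x ^ (-c)) 1
    rw [this, integral_rpow (Or.inr ⟨by intro h; linarith, by
      rw [Set.mem_uIcc]; push_neg; constructor <;> intro h <;> nlinarith⟩)]
    ring_nf
  rw [heq, step2]
  have h1 : (0:ℝ) ≤ (1+β)^(1-c) := rpow_nonneg (by linarith) _
  rw [show ((1+β)^(1-c) - (1+α)^(1-c))/(1-c) = ((1+α)^(1-c) - (1+β)^(1-c))/(c-1) by
    rw [div_eq_div_iff (by linarith) (by linarith)]; ring]
  gcongr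
  · linarith

noncomputable def Fm (p κ m s : ℝ) : ℝ :=
  (1 + |s|) ^ (-(p - 1)) * (1 + |s + abs (m - s)|) ^ (-p)
    * (1 + |s - abs (m - s)|) ^ (-(p * (κ - 1))) * (1 + |m - s|)

lemma cont_oam' (c : ℝ) : Continuous (fun u : ℝ => (1+|u|) ^ (-c)) := by
  apply Continuous.rpow_const (continuous_const.add continuous_abs)
  intro x; left; exact (by positivity : (0:ℝ) < 1 + |x|).ne'

lemma contFm (p κ m : ℝ) : Continuous (Fm p κ m) := by
  unfold Fm
  have c1 : Continuous (fun s : ℝ => s + |m - s|) :=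
    continuous_id.add (continuous_const.sub continuous_id).abs
  have c2 : Continuous (fun s : ℝ => s - |m - s|) :=
    continuous_id.sub (continuous_const.sub continuous_id).abs
  exact (((cont_oam' (p-1)).mul ((cont_oam' p).comp c1)).mul
    ((cont_oam' (p*(κ-1))).comp c2)).mul
    (continuous_const.add (continuous_const.sub continuous_id).abs)

lemma comb {x e1 e2 e : ℝ} (hx : 0 ≤ x) (he : e1 + e2 ≤ e) :
    (1+x)^e1 * (1+x)^e2 ≤ (1+x)^e := by
  rw [← Real.rpow_add (by linarith)]
  exact rpow_le_rpow_of_exponent_le (by linarith) he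

lemma pt_scale {c x m q : ℝ} (hc : 0 ≤ c) (hq : 1 ≤ q) (hm : 0 ≤ m) (hx : m/q ≤ x) :
    (1+|x|)^(-c) ≤ q^c * (1+m)^(-c) := by
  have hq0 : (0:ℝ) < q := by linarith
  have hx0 : 0 ≤ x := le_trans (by positivity) hx
  have h1 : (1+m)/q ≤ 1 + |x| := by
    rw [abs_of_nonneg hx0, div_le_iff₀ hq0]
    nlinarith [(div_le_iff₀ hq0).mp hx]
  have h2 : (1+|x|)^(-c) ≤ ((1+m)/q)^(-c) :=
    rpow_le_rpow_of_nonpos (by positivity) h1 (by linarith)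
  refine h2.trans_eq ?_
  rw [Real.div_rpow (by linarith) (by linarith), Real.rpow_neg (by linarith),
    Real.rpow_neg hq0.le]
  field_simp

lemma ptA {p κ m s : ℝ} (hp1 : 1 ≤ p) (hs : 0 ≤ s) (hms : m ≤ s) :
    Fm p κ m s ≤ (1+|m|)^(-(p*(κ-1))) * (1+|s|)^(-(2*(p-1))) := by
  unfold Fm
  have habs : |m - s| = s - m := by rw [abs_sub_comm, abs_of_nonneg (by linarith)]
  rw [habs, abs_of_nonneg hs, show s + (s - m) = 2*s - m by ring,
    show s - (s - m) = m by ring,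
    abs_of_nonneg (show (0:ℝ) ≤ 2*s - m by linarith)]
  have hb2 : (0:ℝ) < 1 + (2*s - m) := by linarith
  have key : (1+(2*s-m))^(-p) * (1+(s-m)) ≤ (1+s)^(-(p-1)) := by
    have k1 : (1+(2*s-m))^(-p) * (1+(s-m)) ≤ (1+(2*s-m))^(-p) * (1+(2*s-m)) := by
      apply mul_le_mul_of_nonneg_left (by linarith) (rpow_nonneg hb2.le _)
    have k2 : (1+(2*s-m))^(-p) * (1+(2*s-m)) = (1+(2*s-m))^(-p+1) := by
      rw [Real.rpow_add_one hb2.ne' (-p)]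
    have k3 : (1+(2*s-m))^(-p+1) ≤ (1+s)^(-(p-1)) := by
      rw [show -p+1 = -(p-1) by ring]
      exact rpow_le_rpow_of_nonpos (by linarith) (by linarith) (by linarith)
    calc (1+(2*s-m))^(-p) * (1+(s-m)) ≤ _ := k1
      _ = _ := k2
      _ ≤ _ := k3
  have e1 : (0:ℝ) ≤ (1+s)^(-(p-1)) := rpow_nonneg (by linarith) _
  have e2 : (0:ℝ) ≤ (1+|m|)^(-(p*(κ-1))) := rpow_nonneg (by positivity) _
  calc (1+s)^(-(p-1)) * (1+(2*s-m))^(-p) * (1+|m|)^(-(p*(κ-1))) * (1+(s-m))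
      = (1+|m|)^(-(p*(κ-1))) * ((1+s)^(-(p-1)) * ((1+(2*s-m))^(-p) * (1+(s-m)))) := by ring
    _ ≤ (1+|m|)^(-(p*(κ-1))) * ((1+s)^(-(p-1)) * (1+s)^(-(p-1))) := by
        apply mul_le_mul_of_nonneg_left (mul_le_mul_of_nonneg_left key e1) e2
    _ ≤ (1+|m|)^(-(p*(κ-1))) * (1+s)^(-(2*(p-1))) := by
        apply mul_le_mul_of_nonneg_left (comb hs (by ring_nf; rfl)) e2

lemma ptB {p κ m s : ℝ} (hp1 : 1 ≤ p) (hb : 0 ≤ p*(κ-1)) (hs : 0 ≤ s) (hsm : s ≤ m) :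
    Fm p κ m s ≤ (1+m)^(-(p-1)) * ((1+|s|)^(-(p-1)) * (1+|m-2*s|)^(-(p*(κ-1)))) := by
  unfold Fm
  have hm : 0 ≤ m := hs.trans hsm
  have habs : |m - s| = m - s := abs_of_nonneg (by linarith)
  rw [habs, show s + (m - s) = m by ring, show s - (m - s) = 2*s - m by ring,
    abs_of_nonneg hm, abs_sub_comm (2*s) m]
  have hb1 : (0:ℝ) < 1 + m := by linarith
  have key : (1+m)^(-p) * (1+(m-s)) ≤ (1+m)^(-(p-1)) := by
    have k1 : (1+m)^(-p) * (1+(m-s)) ≤ (1+m)^(-p) * (1+m) := by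
      apply mul_le_mul_of_nonneg_left (by linarith) (rpow_nonneg hb1.le _)
    have k2 : (1+m)^(-p) * (1+m) = (1+m)^(-p+1) := by
      rw [Real.rpow_add_one hb1.ne' (-p)]
    rw [show -(p-1) = -p+1 by ring]
    exact k1.trans_eq k2
  have e1 : (0:ℝ) ≤ (1+|s|)^(-(p-1)) := rpow_nonneg (by positivity) _
  have e2 : (0:ℝ) ≤ (1+|m-2*s|)^(-(p*(κ-1))) := rpow_nonneg (by positivity) _
  calc (1+|s|)^(-(p-1)) * (1+m)^(-p) * (1+|m-2*s|)^(-(p*(κ-1))) * (1+(m-s))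
      = ((1+m)^(-p) * (1+(m-s))) * ((1+|s|)^(-(p-1)) * (1+|m-2*s|)^(-(p*(κ-1)))) := by ring
    _ ≤ (1+m)^(-(p-1)) * ((1+|s|)^(-(p-1)) * (1+|m-2*s|)^(-(p*(κ-1)))) := by
        apply mul_le_mul_of_nonneg_right key (mul_nonneg e1 e2)
lemma claimB {p κ : ℝ} (hp1 : 1 ≤ p) (h2a : 1 < 2*(p-1)) (hbge : κ - 1 ≤ p*(κ-1))
    {m t : ℝ} (hm : m ≤ 0) (ht : 0 ≤ t) :
    ∫ s in (0:ℝ)..t, Fm p κ m s ≤ (2*(p-1)-1)⁻¹ * (1+|m|)^(-(κ-1)) := by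
  have e0 : (0:ℝ) ≤ (1+|m|)^(-(p*(κ-1))) := rpow_nonneg (by positivity) _
  calc ∫ s in (0:ℝ)..t, Fm p κ m s
      ≤ ∫ s in (0:ℝ)..t, (1+|m|)^(-(p*(κ-1))) * (1+|s|)^(-(2*(p-1))) := by
        apply integral_mono_on ht ((contFm p κ m).intervalIntegrable 0 t)
          ((continuous_const.mul (cont_oam (2*(p-1)))).intervalIntegrable 0 t)
        exact fun x hx => ptA hp1 hx.1 (hm.trans hx.1)
    _ = (1+|m|)^(-(p*(κ-1))) * ∫ s in (0:ℝ)..t, (1+|s|)^(-(2*(p-1))) :=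
        integral_const_mul _ _
    _ ≤ (1+|m|)^(-(p*(κ-1))) * ((1+0)^(1-2*(p-1)) / (2*(p-1)-1)) := by
        apply mul_le_mul_of_nonneg_left (L_tail h2a le_rfl ht) e0
    _ = (2*(p-1)-1)⁻¹ * (1+|m|)^(-(p*(κ-1))) := by
        rw [add_zero, Real.one_rpow]; ring
    _ ≤ (2*(p-1)-1)⁻¹ * (1+|m|)^(-(κ-1)) := by
        apply mul_le_mul_of_nonneg_left
          (rpow_le_rpow_of_exponent_le (le_add_of_nonneg_right (abs_nonneg m)) (by linarith))
          (inv_nonneg.mpr (by linarith))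

lemma claimA {p κ Ca ea Cb eb : ℝ} (hp1 : 1 ≤ p) (h2a : 1 < 2*(p-1))
    (hbpos : 0 < p*(κ-1))
    (hexpA : -(p*(κ-1)) + (1 - 2*(p-1)) ≤ -κ)
    (hCa : 0 < Ca) (hea0 : 0 ≤ ea) (heaκ : -(p-1) + (-(p*(κ-1)) + ea) ≤ -κ)
    (hCb : 0 < Cb) (heb0 : 0 ≤ eb) (hebκ : -(p-1) + (-(p-1) + eb) ≤ -κ)
    (hintA : ∀ M, 0 ≤ M → ∫ u in (0:ℝ)..M, (1+|u|)^(-(p-1)) ≤ Ca * (1+M)^ea)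
    (hintB : ∀ M, 0 ≤ M → ∫ u in (0:ℝ)..M, (1+|u|)^(-(p*(κ-1))) ≤ Cb * (1+M)^eb)
    {m t : ℝ} (hm : 0 ≤ m) (hmt : m ≤ t) :
    ∫ s in (0:ℝ)..t, Fm p κ m s
      ≤ ((2*(p-1)-1)⁻¹ + 2*(2:ℝ)^(p*(κ-1))*Ca + (4:ℝ)^(p-1)*Cb) * (1+m)^(-κ) := by
  have hm1 : (0:ℝ) < 1 + m := by linarith
  have hFi : ∀ α β : ℝ, IntervalIntegrable (Fm p κ m) volume α β :=
    fun α β => (contFm p κ m).intervalIntegrable α β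
  have hsplit : ∫ s in (0:ℝ)..t, Fm p κ m s
      = (∫ s in (0:ℝ)..m, Fm p κ m s) + ∫ s in m..t, Fm p κ m s :=
    (integral_add_adjacent_intervals (hFi 0 m) (hFi m t)).symm
  -- tail part
  have htail : ∫ s in m..t, Fm p κ m s ≤ (2*(p-1)-1)⁻¹ * (1+m)^(-κ) := by
    have e0 : (0:ℝ) ≤ (1+|m|)^(-(p*(κ-1))) := rpow_nonneg (by positivity) _
    calc ∫ s in m..t, Fm p κ m s
        ≤ ∫ s in m..t, (1+|m|)^(-(p*(κ-1))) * (1+|s|)^(-(2*(p-1))) := by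
          apply integral_mono_on hmt (hFi m t)
            ((continuous_const.mul (cont_oam (2*(p-1)))).intervalIntegrable m t)
          exact fun x hx => ptA hp1 (hm.trans hx.1) hx.1
      _ = (1+|m|)^(-(p*(κ-1))) * ∫ s in m..t, (1+|s|)^(-(2*(p-1))) :=
          integral_const_mul _ _
      _ ≤ (1+|m|)^(-(p*(κ-1))) * ((1+m)^(1-2*(p-1)) / (2*(p-1)-1)) := by
          apply mul_le_mul_of_nonneg_left (L_tail h2a hm hmt) e0
      _ = ((1+m)^(-(p*(κ-1))) * (1+m)^(1-2*(p-1))) / (2*(p-1)-1) := by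
          rw [abs_of_nonneg hm]; ring
      _ ≤ (1+m)^(-κ) / (2*(p-1)-1) := by
          gcongr
          · exact comb hm hexpA
      _ = (2*(p-1)-1)⁻¹ * (1+m)^(-κ) := by rw [div_eq_inv_mul]
  -- middle part
  have hmid : ∫ s in (0:ℝ)..m, Fm p κ m s
      ≤ (2*(2:ℝ)^(p*(κ-1))*Ca + (4:ℝ)^(p-1)*Cb) * (1+m)^(-κ) := by
    set b := p*(κ-1) with hbdef
    set h : ℝ → ℝ := fun s => (1+|s|)^(-(p-1)) * (1+|m-2*s|)^(-b) with hhdef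
    have hconth : Continuous h := by
      apply (cont_oam (p-1)).mul
      exact (cont_oam b).comp (continuous_const.sub (continuous_const.mul continuous_id))
    have hinth : ∀ α β : ℝ, IntervalIntegrable h volume α β :=
      fun α β => hconth.intervalIntegrable α β
    have step0 : ∫ s in (0:ℝ)..m, Fm p κ m s ≤ (1+m)^(-(p-1)) * ∫ s in (0:ℝ)..m, h s := by
      rw [← intervalIntegral.integral_const_mul]
      apply integral_mono_on hm (hFi 0 m)
        ((continuous_const.mul hconth).intervalIntegrable 0 m)
      exact fun x hx => ptB hp1 hbpos.le hx.1 hx.2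
    -- splitting of ∫ h
    have hq1 : (0:ℝ) ≤ m/4 := by linarith
    have hq2 : m/4 ≤ m/2 := by linarith
    have hq3 : m/2 ≤ 3*m/4 := by linarith
    have hq4 : 3*m/4 ≤ m := by linarith
    have hsplith : ∫ s in (0:ℝ)..m, h s
        = (((∫ s in (0:ℝ)..(m/4), h s) + ∫ s in (m/4)..(m/2), h s)
            + ∫ s in (m/2)..(3*m/4), h s) + ∫ s in (3*m/4)..m, h s := by
      rw [integral_add_adjacent_intervals (hinth 0 (m/4)) (hinth (m/4) (m/2)),
        integral_add_adjacent_intervals (hinth 0 (m/2)) (hinth (m/2) (3*m/4)),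
        integral_add_adjacent_intervals (hinth 0 (3*m/4)) (hinth (3*m/4) m)]
    have e_a : ∀ x:ℝ, (0:ℝ) ≤ (1+|x|)^(-(p-1)) := fun x => rpow_nonneg (by positivity) _
    have e_b : ∀ x:ℝ, (0:ℝ) ≤ (1+|x|)^(-b) := fun x => rpow_nonneg (by positivity) _
    have hc2 : (0:ℝ) ≤ (2:ℝ)^b * (1+m)^(-b) := by positivity
    have hc4 : (0:ℝ) ≤ (4:ℝ)^(p-1) * (1+m)^(-(p-1)) := by positivity
    have hmm : (1:ℝ) + m/4 ≤ 1 + m := by linarith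
    have hmm2 : (1:ℝ) + m/2 ≤ 1 + m := by linarith
    have hp0 : (0:ℝ) ≤ p - 1 := by linarith
    -- Q1
    have hQ1 : ∫ s in (0:ℝ)..(m/4), h s ≤ (2:ℝ)^b * Ca * ((1+m)^(-b) * (1+m)^ea) := by
      calc ∫ s in (0:ℝ)..(m/4), h s
          ≤ ∫ s in (0:ℝ)..(m/4), ((2:ℝ)^b * (1+m)^(-b)) * (1+|s|)^(-(p-1)) := by
            apply integral_mono_on hq1 (hinth 0 (m/4))
              ((continuous_const.mul (cont_oam (p-1))).intervalIntegrable _ _)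
            intro x hx
            show (1+|x|)^(-(p-1)) * (1+|m-2*x|)^(-b) ≤ _
            have hpt : (1+|m-2*x|)^(-b) ≤ (2:ℝ)^b * (1+m)^(-b) :=
              pt_scale hbpos.le one_le_two hm (by linarith [hx.2] : m/2 ≤ m-2*x)
            exact (mul_le_mul_of_nonneg_left hpt (e_a x)).trans_eq (mul_comm _ _)
        _ = (2:ℝ)^b * (1+m)^(-b) * ∫ s in (0:ℝ)..(m/4), (1+|s|)^(-(p-1)) :=
            integral_const_mul _ _
        _ ≤ (2:ℝ)^b * (1+m)^(-b) * (Ca * (1+m/4)^ea) :=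
            mul_le_mul_of_nonneg_left (hintA _ hq1) hc2
        _ ≤ (2:ℝ)^b * (1+m)^(-b) * (Ca * (1+m)^ea) := by
            apply mul_le_mul_of_nonneg_left
              (mul_le_mul_of_nonneg_left (rpow_le_rpow (by linarith) hmm hea0) hCa.le) hc2
        _ = (2:ℝ)^b * Ca * ((1+m)^(-b) * (1+m)^ea) := by ring
    -- Q4
    have hQ4 : ∫ s in (3*m/4)..m, h s ≤ (2:ℝ)^b * Ca * ((1+m)^(-b) * (1+m)^ea) := by
      calc ∫ s in (3*m/4)..m, h s
          ≤ ∫ s in (3*m/4)..m, ((2:ℝ)^b * (1+m)^(-b)) * (1+|s|)^(-(p-1)) := by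
            apply integral_mono_on hq4 (hinth _ _)
              ((continuous_const.mul (cont_oam (p-1))).intervalIntegrable _ _)
            intro x hx
            show (1+|x|)^(-(p-1)) * (1+|m-2*x|)^(-b) ≤ _
            have hpt : (1+|m-2*x|)^(-b) ≤ (2:ℝ)^b * (1+m)^(-b) := by
              rw [abs_sub_comm]
              exact pt_scale hbpos.le one_le_two hm (by linarith [hx.1] : m/2 ≤ 2*x-m)
            exact (mul_le_mul_of_nonneg_left hpt (e_a x)).trans_eq (mul_comm _ _)
        _ = (2:ℝ)^b * (1+m)^(-b) * ∫ s in (3*m/4)..m, (1+|s|)^(-(p-1)) :=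
            integral_const_mul _ _
        _ ≤ (2:ℝ)^b * (1+m)^(-b) * ∫ s in (0:ℝ)..m, (1+|s|)^(-(p-1)) := by
            apply mul_le_mul_of_nonneg_left ?_ hc2
            apply integral_mono_interval (by linarith) hq4 le_rfl
              (Filter.Eventually.of_forall (fun x => e_a x)) (int_oam _ 0 m)
        _ ≤ (2:ℝ)^b * (1+m)^(-b) * (Ca * (1+m)^ea) :=
            mul_le_mul_of_nonneg_left (hintA _ hm) hc2
        _ = (2:ℝ)^b * Ca * ((1+m)^(-b) * (1+m)^ea) := by ring
    -- inner integral bound for Q2/Q3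
    have hIb : ∫ u in (0:ℝ)..(m/2), (1+|u|)^(-b) ≤ Cb * (1+m)^eb := by
      refine (hintB _ (by linarith)).trans ?_
      exact mul_le_mul_of_nonneg_left (rpow_le_rpow (by linarith) hmm2 heb0) hCb.le
    -- Q2
    have hQ2 : ∫ s in (m/4)..(m/2), h s
        ≤ (4:ℝ)^(p-1) * (Cb/2) * ((1+m)^(-(p-1)) * (1+m)^eb) := by
      have hsub : ∫ s in (m/4)..(m/2), (1+|m-2*s|)^(-b)
          = (2:ℝ)⁻¹ * ∫ u in (0:ℝ)..(m/2), (1+|u|)^(-b) := by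
        simp only [show ∀ x:ℝ, m - 2*x = (-2)*x + m from fun x => by ring]
        rw [intervalIntegral.integral_comp_mul_add (fun u : ℝ => (1+|u|)^(-b))
          (by norm_num : (-2:ℝ) ≠ 0) m]
        rw [show (-2)*(m/4)+m = m/2 by ring, show (-2)*(m/2)+m = (0:ℝ) by ring,
          intervalIntegral.integral_symm]
        simp only [smul_eq_mul]
        ring
      calc ∫ s in (m/4)..(m/2), h s
          ≤ ∫ s in (m/4)..(m/2), ((4:ℝ)^(p-1) * (1+m)^(-(p-1))) * (1+|m-2*s|)^(-b) := by
            apply integral_mono_on hq2 (hinth _ _) ?_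
            · intro x hx
              show (1+|x|)^(-(p-1)) * (1+|m-2*x|)^(-b) ≤ _
              exact mul_le_mul_of_nonneg_right
                (pt_scale hp0 (by norm_num) hm hx.1) (e_b _)
            · exact (continuous_const.mul ((cont_oam b).comp
                (continuous_const.sub (continuous_const.mul continuous_id)))).intervalIntegrable _ _
        _ = ((4:ℝ)^(p-1) * (1+m)^(-(p-1))) * ∫ s in (m/4)..(m/2), (1+|m-2*s|)^(-b) :=
            integral_const_mul _ _
        _ ≤ ((4:ℝ)^(p-1) * (1+m)^(-(p-1))) * ((2:ℝ)⁻¹ * (Cb * (1+m)^eb)) := by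
            rw [hsub]
            exact mul_le_mul_of_nonneg_left
              (mul_le_mul_of_nonneg_left hIb (by norm_num)) hc4
        _ = (4:ℝ)^(p-1) * (Cb/2) * ((1+m)^(-(p-1)) * (1+m)^eb) := by ring
    -- Q3
    have hQ3 : ∫ s in (m/2)..(3*m/4), h s
        ≤ (4:ℝ)^(p-1) * (Cb/2) * ((1+m)^(-(p-1)) * (1+m)^eb) := by
      have hsub : ∫ s in (m/2)..(3*m/4), (1+|m-2*s|)^(-b)
          = (2:ℝ)⁻¹ * ∫ u in (0:ℝ)..(m/2), (1+|u|)^(-b) := by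
        simp only [show ∀ x:ℝ, |m - 2*x| = |2*x + -m| from fun x => by
          rw [abs_sub_comm, sub_eq_add_neg]]
        rw [intervalIntegral.integral_comp_mul_add (fun u : ℝ => (1+|u|)^(-b))
          (by norm_num : (2:ℝ) ≠ 0) (-m)]
        rw [show 2*(m/2)+(-m) = (0:ℝ) by ring, show 2*(3*m/4)+(-m) = m/2 by ring]
        simp only [smul_eq_mul]
      calc ∫ s in (m/2)..(3*m/4), h s
          ≤ ∫ s in (m/2)..(3*m/4), ((4:ℝ)^(p-1) * (1+m)^(-(p-1))) * (1+|m-2*s|)^(-b) := by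
            apply integral_mono_on hq3 (hinth _ _) ?_
            · intro x hx
              show (1+|x|)^(-(p-1)) * (1+|m-2*x|)^(-b) ≤ _
              exact mul_le_mul_of_nonneg_right
                (pt_scale hp0 (by norm_num) hm (by linarith [hx.1] : m/4 ≤ x)) (e_b _)
            · exact (continuous_const.mul ((cont_oam b).comp
                (continuous_const.sub (continuous_const.mul continuous_id)))).intervalIntegrable _ _
        _ = ((4:ℝ)^(p-1) * (1+m)^(-(p-1))) * ∫ s in (m/2)..(3*m/4), (1+|m-2*s|)^(-b) :=
            integral_const_mul _ _
        _ ≤ ((4:ℝ)^(p-1) * (1+m)^(-(p-1))) * ((2:ℝ)⁻¹ * (Cb * (1+m)^eb)) := by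
            rw [hsub]
            exact mul_le_mul_of_nonneg_left
              (mul_le_mul_of_nonneg_left hIb (by norm_num)) hc4
        _ = (4:ℝ)^(p-1) * (Cb/2) * ((1+m)^(-(p-1)) * (1+m)^eb) := by ring
    -- combine
    have hY1 : (1+m)^(-(p-1)) * ((1+m)^(-b) * (1+m)^ea) ≤ (1+m)^(-κ) := by
      calc (1+m)^(-(p-1)) * ((1+m)^(-b) * (1+m)^ea)
          ≤ (1+m)^(-(p-1)) * (1+m)^(-b+ea) :=
            mul_le_mul_of_nonneg_left (comb hm le_rfl) (rpow_nonneg hm1.le _)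
        _ ≤ (1+m)^(-κ) := comb hm (by linarith [heaκ])
    have hY2 : (1+m)^(-(p-1)) * ((1+m)^(-(p-1)) * (1+m)^eb) ≤ (1+m)^(-κ) := by
      calc (1+m)^(-(p-1)) * ((1+m)^(-(p-1)) * (1+m)^eb)
          ≤ (1+m)^(-(p-1)) * (1+m)^(-(p-1)+eb) :=
            mul_le_mul_of_nonneg_left (comb hm le_rfl) (rpow_nonneg hm1.le _)
        _ ≤ (1+m)^(-κ) := comb hm (by linarith [hebκ])
    calc ∫ s in (0:ℝ)..m, Fm p κ m s
        ≤ (1+m)^(-(p-1)) * ∫ s in (0:ℝ)..m, h s := step0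
      _ ≤ (1+m)^(-(p-1)) * (2*((2:ℝ)^b * Ca * ((1+m)^(-b) * (1+m)^ea))
            + (4:ℝ)^(p-1) * Cb * ((1+m)^(-(p-1)) * (1+m)^eb)) := by
          apply mul_le_mul_of_nonneg_left ?_ (rpow_nonneg hm1.le _)
          rw [hsplith]; linarith [hQ1, hQ2, hQ3, hQ4]
      _ = 2*((2:ℝ)^b * Ca) * ((1+m)^(-(p-1)) * ((1+m)^(-b) * (1+m)^ea))
            + ((4:ℝ)^(p-1) * Cb) * ((1+m)^(-(p-1)) * ((1+m)^(-(p-1)) * (1+m)^eb)) := by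
          ring
      _ ≤ 2*((2:ℝ)^b * Ca) * (1+m)^(-κ) + ((4:ℝ)^(p-1) * Cb) * (1+m)^(-κ) := by
          have c1 : (0:ℝ) ≤ 2*((2:ℝ)^b * Ca) := by positivity
          have c2 : (0:ℝ) ≤ (4:ℝ)^(p-1) * Cb := by positivity
          exact add_le_add (mul_le_mul_of_nonneg_left hY1 c1)
            (mul_le_mul_of_nonneg_left hY2 c2)
      _ = (2*(2:ℝ)^b*Ca + (4:ℝ)^(p-1)*Cb) * (1+m)^(-κ) := by ring
  rw [hsplit]
  calc (∫ s in (0:ℝ)..m, Fm p κ m s) + ∫ s in m..t, Fm p κ m s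
      ≤ (2*(2:ℝ)^(p*(κ-1))*Ca + (4:ℝ)^(p-1)*Cb) * (1+m)^(-κ)
        + (2*(p-1)-1)⁻¹ * (1+m)^(-κ) := add_le_add hmid htail
    _ = ((2*(p-1)-1)⁻¹ + 2*(2:ℝ)^(p*(κ-1))*Ca + (4:ℝ)^(p-1)*Cb) * (1+m)^(-κ) := by ring
/-- Estimates for `I_{1,-}`: `I_{1,-}(t,r) ≲ ⟨t-r⟩^{-κ}` if `t ≥ 2r` and
`I_{1,-}(t,r) ≲ ⟨t-r⟩^{-(κ-1)}` if `t ≤ 2r`. -/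
theorem stmt14 (p κ : ℝ) (hp : (3 + Real.sqrt 17) / 4 < p)
    (hκ1 : p < 2 → (3 - p) / (p - 1) ≤ κ ∧ κ ≤ 2 * (p - 1))
    (hκ2 : 2 ≤ p → 1 < κ ∧ κ ≤ 2 * (p - 1)) :
    ∃ C > (0:ℝ), ∀ t ≥ (0:ℝ), ∀ r ≥ (0:ℝ),
      (2 * r ≤ t → I1m p κ t r ≤ C * (1 + |t - r|) ^ (-κ))
      ∧ (t ≤ 2 * r → I1m p κ t r ≤ C * (1 + |t - r|) ^ (-(κ - 1))) := by
  -- numeric facts about p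
  have h17 : (4:ℝ) ≤ Real.sqrt 17 := by
    rw [show (4:ℝ) = Real.sqrt 16 by
      rw [show (16:ℝ) = 4^2 by norm_num, Real.sqrt_sq (by norm_num)]]
    exact Real.sqrt_le_sqrt (by norm_num)
  have hp74 : (7:ℝ)/4 < p := by linarith
  have hp1 : (1:ℝ) ≤ p := by linarith
  have h2a : (1:ℝ) < 2*(p-1) := by linarith
  have hquad : 0 < 2*p^2 - 3*p - 1 := by
    have hs : Real.sqrt 17 ^ 2 = 17 := Real.sq_sqrt (by norm_num)
    nlinarith [Real.sqrt_nonneg 17]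
  -- facts about κ
  have hκub : κ ≤ 2*(p-1) := by
    rcases lt_or_ge p 2 with h | h
    · exact (hκ1 h).2
    · exact (hκ2 h).2
  have hκgt1 : 1 < κ := by
    rcases lt_or_ge p 2 with h | h
    · have h1 := (hκ1 h).1
      have hp1' : (0:ℝ) < p - 1 := by linarith
      have : (1:ℝ) < (3-p)/(p-1) := (one_lt_div hp1').mpr (by linarith)
      linarith
    · exact (hκ2 h).1
  have hH3 : 3 - p ≤ κ*(p-1) := by
    rcases lt_or_ge p 2 with h | h
    · have h1 := (hκ1 h).1
      have hp1' : (0:ℝ) < p - 1 := by linarith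
      rw [div_le_iff₀ hp1'] at h1
      linarith
    · nlinarith [(hκ2 h).1]
  have hκp1 : 1 < κ*(p-1) := by
    rcases lt_or_ge p 2 with h | h
    · linarith
    · nlinarith [(hκ2 h).1]
  have hbpos : 0 < p*(κ-1) := by nlinarith
  have hbge : κ - 1 ≤ p*(κ-1) := by nlinarith
  have hexpA : -(p*(κ-1)) + (1 - 2*(p-1)) ≤ -κ := by nlinarith
  -- package for the (p-1)-integral
  have hPa : ∃ Ca ea : ℝ, 0 < Ca ∧ 0 ≤ ea ∧ (-(p-1) + (-(p*(κ-1)) + ea) ≤ -κ) ∧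
      ∀ M, 0 ≤ M → ∫ u in (0:ℝ)..M, (1+|u|)^(-(p-1)) ≤ Ca * (1+M)^ea := by
    set A' := min (p-1) (max (2 - κ*(p-1)) 0) with hA'
    have hA'0 : 0 ≤ A' := le_min (by linarith) (le_max_right _ _)
    have hA'a : A' ≤ p-1 := min_le_left _ _
    have hA'1 : A' < 1 := lt_of_le_of_lt (min_le_right _ _) (max_lt (by linarith) one_pos)
    have hA'ge : 2 - κ*(p-1) ≤ A' := le_min (by linarith) (le_max_left _ _)
    refine ⟨(1-A')⁻¹, 1-A', inv_pos.mpr (by linarith), by linarith, by nlinarith, ?_⟩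
    intro M hM
    have := L_le hA'0 hA'a hA'1 hM
    rwa [div_eq_inv_mul] at this
  obtain ⟨Ca, ea, hCa, hea0, heaκ, hintA⟩ := hPa
  -- package for the p(κ-1)-integral
  have hPb : ∃ Cb eb : ℝ, 0 < Cb ∧ 0 ≤ eb ∧ (-(p-1) + (-(p-1) + eb) ≤ -κ) ∧
      ∀ M, 0 ≤ M → ∫ u in (0:ℝ)..M, (1+|u|)^(-(p*(κ-1))) ≤ Cb * (1+M)^eb := by
    rcases le_or_gt (p*(κ-1)) 1 with hble | hbgt
    · have hcor : κ < 2*p - 2 := by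
        by_contra hcon
        push_neg at hcon
        have hκeq : κ = 2*(p-1) := le_antisymm hκub (by linarith)
        rw [hκeq] at hble
        nlinarith
      set B' := min (p*(κ-1)) (max (κ - 2*p + 3) 0) with hB'
      have hB'0 : 0 ≤ B' := le_min hbpos.le (le_max_right _ _)
      have hB'b : B' ≤ p*(κ-1) := min_le_left _ _
      have hB'1 : B' < 1 := lt_of_le_of_lt (min_le_right _ _) (max_lt (by linarith) one_pos)
      have hB'ge : κ - 2*p + 3 ≤ B' := le_min (by nlinarith) (le_max_left _ _)
      refine ⟨(1-B')⁻¹, 1-B', inv_pos.mpr (by linarith), by linarith, by linarith, ?_⟩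
      intro M hM
      have := L_le hB'0 hB'b hB'1 hM
      rwa [div_eq_inv_mul] at this
    · refine ⟨(p*(κ-1)-1)⁻¹, 0, inv_pos.mpr (by linarith), le_rfl, by linarith, ?_⟩
      intro M hM
      have := L_tail hbgt le_rfl hM
      simpa [Real.one_rpow, Real.rpow_zero, one_div] using this
  obtain ⟨Cb, eb, hCb, heb0, hebκ, hintB⟩ := hPb
  -- the constant
  have hCpos0 : (0:ℝ) < (2*(p-1)-1)⁻¹ + 2*(2:ℝ)^(p*(κ-1))*Ca + (4:ℝ)^(p-1)*Cb :=
    add_pos (add_pos (inv_pos.mpr (by linarith)) (by positivity)) (by positivity)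
  refine ⟨(2*(p-1)-1)⁻¹ + 2*(2:ℝ)^(p*(κ-1))*Ca + (4:ℝ)^(p-1)*Cb, hCpos0, ?_⟩
  set C := (2*(p-1)-1)⁻¹ + 2*(2:ℝ)^(p*(κ-1))*Ca + (4:ℝ)^(p-1)*Cb with hC
  have hCpos : 0 < C := hCpos0
  intro t ht r hr
  have hIrw : I1m p κ t r = ∫ s in (0:ℝ)..t, Fm p κ (t-r) s := by
    unfold I1m Fm
    apply intervalIntegral.integral_congr
    intro s _
    dsimp only
    rw [show t - s - r = t - r - s by ring]
  have hA := fun (hm0 : 0 ≤ t - r) => claimA hp1 h2a hbpos hexpA hCa hea0 heaκ hCb heb0 hebκ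
    hintA hintB hm0 (by linarith : t - r ≤ t)
  constructor
  · intro h2r
    have hm0 : 0 ≤ t - r := by linarith
    rw [hIrw, abs_of_nonneg hm0]
    exact hA hm0
  · intro h2r
    rcases le_or_gt (t-r) 0 with hm | hm
    · rw [hIrw]
      refine (claimB hp1 h2a hbge hm ht).trans ?_
      apply mul_le_mul_of_nonneg_right ?_ (rpow_nonneg (by positivity) _)
      rw [hC]
      have : (0:ℝ) ≤ 2*(2:ℝ)^(p*(κ-1))*Ca := by positivity
      have : (0:ℝ) ≤ (4:ℝ)^(p-1)*Cb := by positivity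
      linarith
    · rw [hIrw, abs_of_nonneg hm.le]
      refine (hA hm.le).trans ?_
      apply mul_le_mul_of_nonneg_left ?_ hCpos.le
      exact rpow_le_rpow_of_exponent_le (by linarith) (by linarith)
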